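/- Let G_1, …, G_t be graphs on a common vertex set, G_∩ their intersection, C a clique in G_∩, and C' ⊆ C a vertex-maximal usually-avg-c-isolated subset. Let C̃ ⊆ C consist of ⌊δ_{G_∩}(C) − c + 2⌋ vertices v with the smallest values of Σ_{i=1}^t deg_{G_i}(v). Then C̃ ⊆ C'. -/

import Mathlib

open Finset
open scoped Classical

variable {V : Type*} [Fintype V] [DecidableEq V]

/-- Number of neighbors of `v` in `G` lying outside `A`. -/
noncomputable def outdeg (G : SimpleGraph V) (v : V) (A : Finset V) : ℕ :=
  (Finset.univ.filter fun u => G.Adj v u ∧ u ∉ A).card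

/-- Degree of `v` in `G`. -/
noncomputable def deg (G : SimpleGraph V) (v : V) : ℕ :=
  (Finset.univ.filter fun u => G.Adj v u).card

/-- Minimum degree over the vertices of a nonempty set `C`. -/
noncomputable def minDeg (G : SimpleGraph V) (C : Finset V) (hC : C.Nonempty) : ℕ :=
  C.inf' hC fun v => deg G v

/-- Edge-wise intersection of the layers `G a, …, G b`. -/
def interGraph (G : ℕ → SimpleGraph V) (a b : ℕ) : SimpleGraph V where
  Adj u v := u ≠ v ∧ ∀ i ∈ Finset.Icc a b, (G i).Adj u v
  symm := ⟨fun u v h => ⟨h.1.symm, fun i hi => (h.2 i hi).symm⟩⟩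
  loopless := ⟨fun v h => h.1 rfl⟩

/-- Edge-wise union of the layers `G a, …, G b`. -/
def unionGraph (G : ℕ → SimpleGraph V) (a b : ℕ) : SimpleGraph V where
  Adj u v := ∃ i ∈ Finset.Icc a b, (G i).Adj u v
  symm := ⟨fun u v h => ⟨h.choose, h.choose_spec.1, h.choose_spec.2.symm⟩⟩
  loopless := ⟨fun v h => (G h.choose).loopless.irrefl v h.choose_spec.2⟩
/-- `S` is usually-avg-`c`-isolated over the layers `G 1, …, G t`. -/
def UsuallyAvgIsolated (G : ℕ → SimpleGraph V) (t : ℕ) (c : ℚ) (S : Finset V) : Prop :=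
  (∑ i ∈ Finset.Icc 1 t, ∑ v ∈ S, (outdeg (G i) v S : ℚ)) < c * S.card * t


lemma outdeg_eq (G : SimpleGraph V) (v : V) (A : Finset V) :
    outdeg G v A + (A.filter fun u => G.Adj v u).card = deg G v := by
  classical
  have h1 : (A.filter fun u => G.Adj v u)
      = (Finset.univ.filter fun u => G.Adj v u).filter (fun u => u ∈ A) := by
    ext u; simp [Finset.mem_filter, and_comm]
  have h2 : (Finset.univ.filter fun u => G.Adj v u ∧ u ∉ A)
      = (Finset.univ.filter fun u => G.Adj v u).filter (fun u => u ∉ A) := by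
    rw [Finset.filter_filter]
  rw [outdeg, deg, h1, h2, add_comm]
  exact Finset.card_filter_add_card_filter_not _

set_option maxHeartbeats 1600000 in
theorem stmt3 (G : ℕ → SimpleGraph V) (t : ℕ) (ht : 1 ≤ t) (c : ℚ) (hc : 0 < c)
    (C C' Ct : Finset V) (hC : C.Nonempty)
    (hclique : (interGraph G 1 t).IsClique (C : Set V)) (hsub : C' ⊆ C)
    (hiso : UsuallyAvgIsolated G t c C')
    (hmax : ∀ C'' : Finset V, C' ⊂ C'' → C'' ⊆ C → ¬ UsuallyAvgIsolated G t c C'')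
    (hCtsub : Ct ⊆ C)
    (hCtcard : (Ct.card : ℤ) = ⌊(minDeg (interGraph G 1 t) C hC : ℚ) - c + 2⌋)
    (hCtmin : ∀ u ∈ Ct, ∀ v ∈ C \ Ct,
      (∑ i ∈ Finset.Icc 1 t, (deg (G i) u : ℚ)) ≤ ∑ i ∈ Finset.Icc 1 t, (deg (G i) v : ℚ)) :
    Ct ⊆ C' := by
  intro v hvCt
  by_contra hvC'
  have hvC : v ∈ C := hCtsub hvCt
  have htq0 : (0:ℚ) < t := by exact_mod_cast Nat.lt_of_lt_of_le Nat.zero_lt_one ht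
  have hC'ne : C'.Nonempty := by
    rcases C'.eq_empty_or_nonempty with h | h
    · exfalso; rw [h] at hiso; simp [UsuallyAvgIsolated] at hiso
    · exact h
  have hn1 : 1 ≤ C'.card := Finset.card_pos.mpr hC'ne
  have hnq1 : (1:ℚ) ≤ C'.card := by exact_mod_cast hn1
  -- adjacency within C
  have hadj : ∀ u ∈ C, ∀ w ∈ C, u ≠ w → ∀ i ∈ Finset.Icc 1 t, (G i).Adj u w := by
    intro u hu w hw hne i hi
    exact And.right (hclique (Finset.mem_coe.mpr hu) (Finset.mem_coe.mpr hw) hne) i hi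
  set Dv : ℚ := ∑ i ∈ Finset.Icc 1 t, (deg (G i) v : ℚ) with hDvdef
  set S : ℚ := ∑ i ∈ Finset.Icc 1 t, ∑ u ∈ C', (outdeg (G i) u C' : ℚ) with hSdef
  have hiso' : S < c * C'.card * t := hiso
  -- C' ∪ {v} is not isolated
  have hnot := hmax (insert v C') (Finset.ssubset_insert hvC') (Finset.insert_subset hvC hsub)
  rw [UsuallyAvgIsolated, not_lt] at hnot
  rw [Finset.card_insert_of_notMem hvC'] at hnot
  -- per-layer bounds on the augmented outdegrees
  have houtv : ∀ i ∈ Finset.Icc 1 t,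
      (outdeg (G i) v (insert v C') : ℚ) ≤ (deg (G i) v : ℚ) - C'.card := by
    intro i hi
    have hid : (outdeg (G i) v (insert v C') : ℚ)
        + (((insert v C').filter fun u => (G i).Adj v u).card : ℚ) = deg (G i) v := by
      exact_mod_cast outdeg_eq (G i) v (insert v C')
    have hsubN : C' ⊆ (insert v C').filter fun u => (G i).Adj v u := by
      intro u hu
      refine Finset.mem_filter.mpr ⟨Finset.mem_insert_of_mem hu, ?_⟩
      exact hadj v hvC u (hsub hu) (fun h => hvC' (h ▸ hu)) i hi
    have hcc : (C'.card : ℚ) ≤ (((insert v C').filter fun u => (G i).Adj v u).card : ℚ) := by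
      exact_mod_cast Finset.card_le_card hsubN
    linarith
  have houtu : ∀ i ∈ Finset.Icc 1 t, ∀ u ∈ C',
      (outdeg (G i) u (insert v C') : ℚ) ≤ (outdeg (G i) u C' : ℚ) - 1 := by
    intro i hi u hu
    have hid1 := outdeg_eq (G i) u (insert v C')
    have hid2 := outdeg_eq (G i) u C'
    have hne : u ≠ v := fun h => hvC' (h ▸ hu)
    have hadjuv : (G i).Adj u v := hadj u (hsub hu) v hvC hne i hi
    have hfil : (insert v C').filter (fun w => (G i).Adj u w)
        = insert v (C'.filter fun w => (G i).Adj u w) := by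
      rw [Finset.filter_insert, if_pos hadjuv]
    have hcard : ((insert v C').filter fun w => (G i).Adj u w).card
        = (C'.filter fun w => (G i).Adj u w).card + 1 := by
      rw [hfil, Finset.card_insert_of_notMem (fun h => hvC' (Finset.mem_filter.mp h).1)]
    have hnat : outdeg (G i) u (insert v C') + 1 ≤ outdeg (G i) u C' := by omega
    have : (outdeg (G i) u (insert v C') : ℚ) + 1 ≤ (outdeg (G i) u C' : ℚ) := by
      exact_mod_cast hnat
    linarith
  -- bound the augmented isolation sum
  have hsum2 : ∑ i ∈ Finset.Icc 1 t, ∑ u ∈ insert v C', (outdeg (G i) u (insert v C') : ℚ)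
      ≤ S + Dv - 2 * t * C'.card := by
    have hper : ∀ i ∈ Finset.Icc 1 t,
        ∑ u ∈ insert v C', (outdeg (G i) u (insert v C') : ℚ)
          ≤ (∑ u ∈ C', (outdeg (G i) u C' : ℚ)) + (deg (G i) v : ℚ) - 2 * C'.card := by
      intro i hi
      rw [Finset.sum_insert hvC']
      have h1 := houtv i hi
      have h2 : ∑ u ∈ C', (outdeg (G i) u (insert v C') : ℚ)
          ≤ ∑ u ∈ C', ((outdeg (G i) u C' : ℚ) - 1) :=
        Finset.sum_le_sum (houtu i hi)
      rw [Finset.sum_sub_distrib, Finset.sum_const, nsmul_eq_mul, mul_one] at h2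
      linarith
    calc ∑ i ∈ Finset.Icc 1 t, ∑ u ∈ insert v C', (outdeg (G i) u (insert v C') : ℚ)
        ≤ ∑ i ∈ Finset.Icc 1 t,
            ((∑ u ∈ C', (outdeg (G i) u C' : ℚ)) + (deg (G i) v : ℚ) - 2 * C'.card) :=
          Finset.sum_le_sum hper
      _ = S + Dv - 2 * t * C'.card := by
          rw [Finset.sum_sub_distrib, Finset.sum_add_distrib, Finset.sum_const, Nat.card_Icc]
          simp only [nsmul_eq_mul, hSdef, hDvdef]
          push_cast
          ring
  have hDv : t * c + 2 * t * C'.card < Dv := by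
    have := hnot.trans hsum2
    push_cast at this
    linarith [hiso']
  -- minimum degree facts
  set dq : ℚ := (minDeg (interGraph G 1 t) C hC : ℚ) with hdqdef
  have hdeg_ge : ∀ u ∈ C, ∀ i ∈ Finset.Icc 1 t, dq ≤ (deg (G i) u : ℚ) := by
    intro u hu i hi
    have h1 : minDeg (interGraph G 1 t) C hC ≤ deg (interGraph G 1 t) u :=
      Finset.inf'_le _ hu
    have h2 : deg (interGraph G 1 t) u ≤ deg (G i) u := by
      apply Finset.card_le_card
      intro w hw
      simp only [Finset.mem_filter, Finset.mem_univ, true_and] at hw ⊢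
      exact hw.2 i hi
    rw [hdqdef]
    exact_mod_cast h1.trans h2
  have hDu_ge : ∀ u ∈ C, (t : ℚ) * dq ≤ ∑ i ∈ Finset.Icc 1 t, (deg (G i) u : ℚ) := by
    intro u hu
    have := Finset.sum_le_sum (hdeg_ge u hu)
    rw [Finset.sum_const, Nat.card_Icc, nsmul_eq_mul] at this
    simpa using this
  have hm_le : (Ct.card : ℚ) ≤ dq - c + 2 := by
    have h := Int.floor_le (dq - c + 2)
    have h2 : ((Ct.card : ℤ) : ℚ) = ((⌊dq - c + 2⌋ : ℤ) : ℚ) := by exact_mod_cast hCtcard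
    push_cast at h2
    linarith
  -- lower bounds on per-vertex outdegree sums in C'
  have hg_ge : ∀ u ∈ C', (∑ i ∈ Finset.Icc 1 t, (deg (G i) u : ℚ)) - t * (C'.card - 1)
      ≤ ∑ i ∈ Finset.Icc 1 t, (outdeg (G i) u C' : ℚ) := by
    intro u hu
    have hper : ∀ i ∈ Finset.Icc 1 t,
        (deg (G i) u : ℚ) - (C'.card - 1) ≤ (outdeg (G i) u C' : ℚ) := by
      intro i hi
      have hid : (outdeg (G i) u C' : ℚ)
          + ((C'.filter fun w => (G i).Adj u w).card : ℚ) = deg (G i) u := by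
        exact_mod_cast outdeg_eq (G i) u C'
      have hss : C'.filter (fun w => (G i).Adj u w) ⊆ C'.erase u := by
        intro w hw
        have := Finset.mem_filter.mp hw
        exact Finset.mem_erase.mpr ⟨fun h => (G i).loopless.irrefl u (h ▸ this.2), this.1⟩
      have hcc : ((C'.filter fun w => (G i).Adj u w).card : ℚ) ≤ (C'.card : ℚ) - 1 := by
        have h1 := Finset.card_le_card hss
        rw [Finset.card_erase_of_mem hu] at h1
        have : ((C'.filter fun w => (G i).Adj u w).card : ℚ) ≤ ((C'.card - 1 : ℕ) : ℚ) := by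
          exact_mod_cast h1
        rw [Nat.cast_sub hn1] at this
        simpa using this
      linarith
    have := Finset.sum_le_sum hper
    rw [Finset.sum_sub_distrib, Finset.sum_const, Nat.card_Icc, nsmul_eq_mul] at this
    simpa using this
  have hg_nonneg : ∀ u : V, 0 ≤ ∑ i ∈ Finset.Icc 1 t, (outdeg (G i) u C' : ℚ) :=
    fun u => Finset.sum_nonneg fun i _ => Nat.cast_nonneg _
  -- |C'| > dq + 1 - c
  have hS_eq : S = ∑ u ∈ C', ∑ i ∈ Finset.Icc 1 t, (outdeg (G i) u C' : ℚ) :=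
    Finset.sum_comm
  have hnd : dq - C'.card + 1 < c := by
    have hlow : (C'.card : ℚ) * ((t:ℚ) * dq - t * (C'.card - 1)) ≤ S := by
      rw [hS_eq]
      have := Finset.card_nsmul_le_sum C'
        (fun u => ∑ i ∈ Finset.Icc 1 t, (outdeg (G i) u C' : ℚ))
        ((t:ℚ) * dq - t * (C'.card - 1))
        (fun u hu => le_trans (by linarith [hDu_ge u (hsub hu)]) (hg_ge u hu))
      rw [nsmul_eq_mul] at this
      exact this
    by_contra hcon
    push_neg at hcon
    have h0 : ((C'.card : ℚ) * t) * c ≤ ((C'.card : ℚ) * t) * (dq - C'.card + 1) :=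
      mul_le_mul_of_nonneg_left hcon (by positivity)
    nlinarith [h0, hlow, hiso']
  have hnm : (Ct.card : ℚ) ≤ (C'.card : ℚ) := by
    have h1 : (Ct.card : ℚ) < (C'.card : ℚ) + 1 := by linarith
    have h2 : Ct.card < C'.card + 1 := by exact_mod_cast h1
    exact_mod_cast Nat.lt_succ_iff.mp h2
  have hm1 : 1 ≤ Ct.card := Finset.card_pos.mpr ⟨v, hvCt⟩
  -- partition C' by membership in Ct
  set A := C'.filter (fun u => u ∈ Ct) with hAdef
  set B := C'.filter (fun u => u ∉ Ct) with hBdef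
  have hAB : A.card + B.card = C'.card := Finset.card_filter_add_card_filter_not _
  have hA_le : (A.card : ℚ) ≤ (Ct.card : ℚ) - 1 := by
    have hss : A ⊆ Ct.erase v := by
      intro u hu
      have h1 := Finset.mem_filter.mp hu
      exact Finset.mem_erase.mpr ⟨fun h => hvC' (h ▸ h1.1), h1.2⟩
    have h1 := Finset.card_le_card hss
    rw [Finset.card_erase_of_mem hvCt] at h1
    have : (A.card : ℚ) ≤ ((Ct.card - 1 : ℕ) : ℚ) := by exact_mod_cast h1
    rw [Nat.cast_sub hm1] at this
    simpa using this
  set L : ℚ := max 0 ((t:ℚ) * (dq - C'.card + 1)) with hLdef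
  have hBsum : (B.card : ℚ) * (Dv - t * ((C'.card : ℚ) - 1))
      ≤ ∑ u ∈ B, ∑ i ∈ Finset.Icc 1 t, (outdeg (G i) u C' : ℚ) := by
    have := Finset.card_nsmul_le_sum B
      (fun u => ∑ i ∈ Finset.Icc 1 t, (outdeg (G i) u C' : ℚ))
      (Dv - t * ((C'.card : ℚ) - 1))
      (fun u hu => by
        have h1 := Finset.mem_filter.mp hu
        have h2 : Dv ≤ ∑ i ∈ Finset.Icc 1 t, (deg (G i) u : ℚ) :=
          hCtmin v hvCt u (Finset.mem_sdiff.mpr ⟨hsub h1.1, h1.2⟩)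
        linarith [hg_ge u h1.1])
    rw [nsmul_eq_mul] at this
    exact this
  have hAsum : (A.card : ℚ) * L
      ≤ ∑ u ∈ A, ∑ i ∈ Finset.Icc 1 t, (outdeg (G i) u C' : ℚ) := by
    have := Finset.card_nsmul_le_sum A
      (fun u => ∑ i ∈ Finset.Icc 1 t, (outdeg (G i) u C' : ℚ)) L
      (fun u hu => by
        have h1 := Finset.mem_filter.mp hu
        refine max_le (hg_nonneg u) ?_
        have h2 := hDu_ge u (hsub h1.1)
        have h3 := hg_ge u h1.1
        nlinarith)
    rw [nsmul_eq_mul] at this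
    exact this
  have hsplit : (∑ u ∈ A, ∑ i ∈ Finset.Icc 1 t, (outdeg (G i) u C' : ℚ))
      + ∑ u ∈ B, ∑ i ∈ Finset.Icc 1 t, (outdeg (G i) u C' : ℚ)
      = ∑ u ∈ C', ∑ i ∈ Finset.Icc 1 t, (outdeg (G i) u C' : ℚ) :=
    Finset.sum_filter_add_sum_filter_not C' _ _
  clear_value Dv S dq A B L
  have hmain : (A.card : ℚ) * L + (B.card : ℚ) * (Dv - t * ((C'.card : ℚ) - 1))
      < c * C'.card * t := by
    calc (A.card : ℚ) * L + (B.card : ℚ) * (Dv - t * ((C'.card : ℚ) - 1))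
        ≤ S := by rw [hS_eq, ← hsplit]; linarith
      _ < c * C'.card * t := hiso'
  -- final contradiction
  have hX : (t:ℚ) * (c + C'.card + 1) < Dv - t * ((C'.card : ℚ) - 1) := by nlinarith
  have hB_ge : (C'.card : ℚ) - (Ct.card : ℚ) + 1 ≤ (B.card : ℚ) := by
    have : (A.card : ℚ) + (B.card : ℚ) = (C'.card : ℚ) := by exact_mod_cast hAB
    linarith
  have hBpos : 0 < (B.card : ℚ) := by linarith [hB_ge]
  rcases le_or_gt (dq - (C'.card : ℚ) + 1) 0 with hcs | hcs
  · -- small dq case: L = 0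
    have hL0 : L = 0 := by
      rw [hLdef]; exact max_eq_left (mul_nonpos_of_nonneg_of_nonpos htq0.le hcs)
    rw [hL0, mul_zero, zero_add] at hmain
    have hcb : c ≤ (B.card : ℚ) := by linarith [hm_le]
    have h1 : (B.card : ℚ) * ((t:ℚ) * (c + C'.card + 1))
        ≤ (B.card : ℚ) * (Dv - t * ((C'.card : ℚ) - 1)) :=
      mul_le_mul_of_nonneg_left hX.le (Nat.cast_nonneg _)
    have h2 : c * ((t:ℚ) * (c + C'.card + 1))
        ≤ (B.card : ℚ) * ((t:ℚ) * (c + C'.card + 1)) :=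
      mul_le_mul_of_nonneg_right hcb
        (by nlinarith [htq0, hc, hnq1])
    nlinarith [mul_pos hc htq0]
  · -- large dq case: L = t * (dq - |C'| + 1)
    have hL : L = (t:ℚ) * (dq - C'.card + 1) := by
      rw [hLdef]; exact max_eq_right (le_of_lt (mul_pos htq0 hcs))
    rw [hL] at hmain
    have hA0 : (0:ℚ) ≤ (A.card : ℚ) := Nat.cast_nonneg _
    have h1 : (A.card : ℚ) * ((t:ℚ) * ((Ct.card : ℚ) + c - 1 - C'.card))
        ≤ (A.card : ℚ) * ((t:ℚ) * (dq - C'.card + 1)) := by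
      apply mul_le_mul_of_nonneg_left _ hA0
      apply mul_le_mul_of_nonneg_left _ htq0.le
      linarith [hm_le]
    have h2 : (B.card : ℚ) * ((t:ℚ) * (c + C'.card + 1))
        ≤ (B.card : ℚ) * (Dv - t * ((C'.card : ℚ) - 1)) :=
      mul_le_mul_of_nonneg_left hX.le hBpos.le
    -- so: A*(t*(m+c-1-n)) + B*(t*(c+n+1)) < c*n*t, divide by t
    have h3 : (t:ℚ) * ((A.card : ℚ) * ((Ct.card : ℚ) + c - 1 - C'.card)
        + (B.card : ℚ) * (c + C'.card + 1)) < (t:ℚ) * (c * C'.card) := by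
      linarith [h1, h2, hmain]
    have h4 : (A.card : ℚ) * ((Ct.card : ℚ) + c - 1 - C'.card)
        + (B.card : ℚ) * (c + C'.card + 1) < c * C'.card :=
      lt_of_mul_lt_mul_left h3 htq0.le
    have hAB' : (A.card : ℚ) + (B.card : ℚ) = (C'.card : ℚ) := by exact_mod_cast hAB
    have k1 : (A.card : ℚ) * ((C'.card:ℚ) + 1 - Ct.card)
        ≤ ((Ct.card:ℚ) - 1) * ((C'.card:ℚ) + 1 - Ct.card) :=
      mul_le_mul_of_nonneg_right hA_le (by linarith)
    have k2 : ((C'.card:ℚ) - Ct.card + 1) * ((C'.card:ℚ) + 1)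
        ≤ (B.card : ℚ) * ((C'.card:ℚ) + 1) :=
      mul_le_mul_of_nonneg_right hB_ge (by linarith)
    have k3 : (0:ℚ) < ((C'.card:ℚ) + 1 - Ct.card) * ((C'.card:ℚ) + 2 - Ct.card) :=
      mul_pos (by linarith) (by linarith)
    have k4 : c * ((A.card:ℚ) + B.card) = c * C'.card := by rw [hAB']
    linarith [k1, k2, k3, h4, k4]
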